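/- Let A be a Banach algebra with rad(A) = rann(A) and A/rad(A) commutative, and let T be a left multiplier of A (T(ab) = T(a)b for all a, b). Then T(A) ⊆ rad(A) if and only if T is spectrally infinitesimal (r(T(a)) = 0 for all a). -/

import Mathlib

open scoped ENNReal

/-- The right annihilator of a (possibly non-unital) algebra. -/
def rannSet (A : Type*) [NonUnitalNonAssocRing A] : Set A :=
  {c : A | ∀ a : A, a * c = 0}

/-- The Jacobson radical of a (possibly non-unital) Banach algebra, defined as
`A ∩ rad(A¹)` via the unitization. -/
def radSet (A : Type*) [NonUnitalRing A] [Module ℂ A]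
    [IsScalarTower ℂ A A] [SMulCommClass ℂ A A] : Set A :=
  {a : A | (a : Unitization ℂ A) ∈ Ideal.jacobson (⊥ : Ideal (Unitization ℂ A))}

/-- Spectral radius of an element of a (possibly non-unital) Banach algebra,
computed in the unitization. -/
noncomputable def sprad {A : Type*} [NonUnitalNormedRing A] [NormedSpace ℂ A]
    [IsScalarTower ℂ A A] [SMulCommClass ℂ A A] (a : A) : ℝ≥0∞ :=
  spectralRadius ℂ ((a : Unitization ℂ A))

/-- The center of an algebra. -/
def centerSet (A : Type*) [Mul A] : Set A := {z : A | ∀ a : A, a * z = z * a}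

/-- `apow a n = a ^ (n + 1)` (powers in a possibly non-unital algebra). -/
def apow {A : Type*} [Mul A] (a : A) : ℕ → A
  | 0 => a
  | n + 1 => apow a n * a

/-- Jacobson's lemma: `1 - x*y` a unit implies `1 - y*x` is a unit. -/
lemma aux_one_sub_swap {B : Type*} [Ring B] {x y : B} (h : IsUnit (1 - x * y)) :
    IsUnit (1 - y * x) := by
  refine ⟨⟨1 - y * x, 1 + y * h.unit.inv * x, ?_, ?_⟩, rfl⟩
  · calc
      (1 - y * x) * (1 + y * (IsUnit.unit h).inv * x) =
          1 - y * x + y * ((1 - x * y) * h.unit.inv) * x := by noncomm_ring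
      _ = 1 := by simp only [Units.inv_eq_val_inv, IsUnit.mul_val_inv, mul_one, sub_add_cancel]
  · calc
      (1 + y * (IsUnit.unit h).inv * x) * (1 - y * x) =
          1 - y * x + y * (h.unit.inv * (1 - x * y)) * x := by noncomm_ring
      _ = 1 := by simp only [Units.inv_eq_val_inv, IsUnit.val_inv_mul, mul_one, sub_add_cancel]

/-- Jacobson's lemma, additive form. -/
lemma aux_swap {B : Type*} [Ring B] {x y : B} (h : IsUnit (x * y + 1)) :
    IsUnit (y * x + 1) := by
  have h' : IsUnit (1 - (-x) * y) := by
    have : 1 - (-x) * y = x * y + 1 := by noncomm_ring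
    rwa [this]
  have := aux_one_sub_swap h'
  have heq : 1 - y * (-x) = y * x + 1 := by noncomm_ring
  rwa [heq] at this

/-- Elements of the Jacobson radical are left quasi-regular. -/
lemma aux_left_qr {B : Type*} [Ring B] {j : B}
    (hj : j ∈ Ideal.jacobson (⊥ : Ideal B)) : ∃ z : B, z * (j + 1) = 1 := by
  obtain ⟨z, hz⟩ := Ideal.mem_jacobson_iff.mp hj 1
  rw [Ideal.mem_bot] at hz
  refine ⟨z, ?_⟩
  have h : z * 1 * j + z - 1 = z * (j + 1) - 1 := by noncomm_ring
  rw [h] at hz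
  exact sub_eq_zero.mp hz

/-- Elements of the Jacobson radical are quasi-regular: `j + 1` is a unit. -/
lemma aux_qr {B : Type*} [Ring B] {j : B}
    (hj : j ∈ Ideal.jacobson (⊥ : Ideal B)) : IsUnit (j + 1) := by
  obtain ⟨z, hz⟩ := aux_left_qr hj
  have hz' : z * j + z = 1 := by rw [← hz, mul_add, mul_one]
  have hzeq : -(z * j) + 1 = z := by rw [← hz']; abel
  have hz1 : -(z * j) ∈ Ideal.jacobson (⊥ : Ideal B) :=
    neg_mem (Ideal.mul_mem_left _ z hj)
  obtain ⟨w, hw⟩ := aux_left_qr hz1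
  rw [hzeq] at hw
  have hwz : w * z = 1 := hw
  have hwval : w = j + 1 := by
    calc w = w * 1 := (mul_one w).symm
    _ = w * (z * (j + 1)) := by rw [hz]
    _ = (w * z) * (j + 1) := by rw [mul_assoc]
    _ = j + 1 := by rw [hwz, one_mul]
  have hright : (j + 1) * z = 1 := by rw [← hwval]; exact hwz
  exact ⟨⟨j + 1, z, hright, hz⟩, rfl⟩

/-- Elements of the Jacobson radical of a unital ring have spectrum contained in `{0}`. -/
lemma aux_spectrum_subset {B : Type*} [Ring B] [Algebra ℂ B] {x : B}
    (hx : x ∈ Ideal.jacobson (⊥ : Ideal B)) : spectrum ℂ x ⊆ {0} := by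
  intro l hl
  by_contra hl0
  have hl0' : (l : ℂ) ≠ 0 := hl0
  rw [spectrum.mem_iff] at hl
  apply hl
  have hmem : (-l⁻¹) • x ∈ Ideal.jacobson (⊥ : Ideal B) := by
    rw [Algebra.smul_def]
    exact Ideal.mul_mem_left _ _ hx
  have h1 : IsUnit ((-l⁻¹) • x + 1) := aux_qr hmem
  have h2 : IsUnit (algebraMap ℂ B l) := by
    simpa using hl0'.isUnit.map (algebraMap ℂ B)
  have h3 := h2.mul h1
  have heq : algebraMap ℂ B l * ((-l⁻¹) • x + 1) = algebraMap ℂ B l - x := by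
    rw [mul_add, mul_one, Algebra.smul_def, ← mul_assoc, ← map_mul]
    rw [show l * (-l⁻¹) = -1 by field_simp]
    simp [Algebra.algebraMap_eq_smul_one, sub_eq_add_neg, add_comm]
  rwa [heq] at h3

/-- Radical elements are quasinilpotent. -/
lemma aux_rad_sprad {B : Type*} [Ring B] [Algebra ℂ B] {x : B}
    (hx : x ∈ Ideal.jacobson (⊥ : Ideal B)) : spectralRadius ℂ x = 0 := by
  rw [spectralRadius]
  refine le_antisymm (iSup₂_le fun l hl => ?_) zero_le
  have : l = 0 := aux_spectrum_subset hx hl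
  simp [this]

/-- Quasinilpotent elements are quasiregular: `x + 1` is a unit. -/
lemma aux_quasireg {B : Type*} [Ring B] [Algebra ℂ B] {x : B}
    (hx : spectralRadius ℂ x = 0) : IsUnit (x + 1) := by
  have hmem : (-1 : ℂ) ∉ spectrum ℂ x := by
    intro hc
    have : (‖(-1 : ℂ)‖₊ : ℝ≥0∞) ≤ spectralRadius ℂ x :=
      le_iSup₂ (f := fun (l : ℂ) (_ : l ∈ spectrum ℂ x) => (‖l‖₊ : ℝ≥0∞)) _ hc
    simp [hx] at this
  rw [spectrum.notMem_iff] at hmem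
  have : algebraMap ℂ B (-1) - x = -(x + 1) := by
    simp [Algebra.algebraMap_eq_smul_one]
    abel
  rw [this] at hmem
  exact (IsUnit.neg_iff _).mp hmem

theorem left_multiplier_radical_iff_spectrally_infinitesimal {A : Type*} [NonUnitalNormedRing A] [NormedSpace ℂ A]
    [IsScalarTower ℂ A A] [SMulCommClass ℂ A A] [CompleteSpace A]
    (hrad : radSet A = rannSet A)
    (hcomm : ∀ a b : A, a * b - b * a ∈ radSet A)
    (T : A →ₗ[ℂ] A) (hT : ∀ a b : A, T (a * b) = T a * b) :
    (∀ a : A, T a ∈ radSet A) ↔ (∀ a : A, sprad (T a) = 0) := by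
  constructor
  · intro h a
    have hmem : ((T a : A) : Unitization ℂ A) ∈ Ideal.jacobson (⊥ : Ideal (Unitization ℂ A)) :=
      h a
    exact aux_rad_sprad hmem
  · intro h a
    show ((T a : A) : Unitization ℂ A) ∈ Ideal.jacobson (⊥ : Ideal (Unitization ℂ A))
    rw [Ideal.mem_jacobson_iff]
    intro y
    set x : Unitization ℂ A := ((T a : A) : Unitization ℂ A) with hx
    have hy := (Unitization.inl_fst_add_inr_snd_eq y).symm
    have key : x * y = ↑(T (y.fst • a + a * y.snd)) := by
      conv_lhs => rw [hy]
      rw [hx, mul_add, Unitization.inr_mul_inl, ← Unitization.inr_mul ℂ, ← Unitization.inr_add,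
        map_add, map_smul, hT]
    have hu : IsUnit (x * y + 1) := by
      rw [key]
      exact aux_quasireg (h _)
    have hu' : IsUnit (y * x + 1) := aux_swap hu
    refine ⟨↑hu'.unit⁻¹, ?_⟩
    rw [Ideal.mem_bot]
    have : (↑hu'.unit⁻¹ : Unitization ℂ A) * (y * x + 1) = 1 := hu'.val_inv_mul
    calc ↑hu'.unit⁻¹ * y * x + ↑hu'.unit⁻¹ - 1
        = ↑hu'.unit⁻¹ * (y * x + 1) - 1 := by noncomm_ring
      _ = 0 := by rw [this, sub_self]
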